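/- Let ω be a smooth 1-form on an open set U ⊆ ℝⁿ with ω_x ≠ 0 at a point x ∈ U. Then ω has constant coefficients on a neighbourhood of x if and only if dω = 0 on a neighbourhood of x. -/

import Mathlib

set_option maxHeartbeats 1000000

open Metric Set MeasureTheory intervalIntegral

namespace OneFormAux

variable {n : ℕ}

noncomputable def κ (n : ℕ) : ((Fin n → ℝ) [×1]→L[ℝ] ℝ) ≃ₗᵢ[ℝ] ((Fin n → ℝ) →L[ℝ] ℝ) :=
  continuousMultilinearCurryFin1 ℝ (Fin n → ℝ) ℝ

lemma ml_apply_const (m : (Fin n → ℝ) [×1]→L[ℝ] ℝ) (v : Fin 1 → (Fin n → ℝ)) :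
    m v = m (fun _ => v 0) := by
  congr 1; funext i; exact congrArg v (Subsingleton.elim i 0)

lemma κ_apply (m : (Fin n → ℝ) [×1]→L[ℝ] ℝ) (w : Fin n → ℝ) :
    κ n m w = m (fun _ => w) := by
  rw [show κ n m w = m (Fin.snoc 0 w) from continuousMultilinearCurryFin1_apply m w]
  congr 1

lemma κ_symm_apply (B : (Fin n → ℝ) →L[ℝ] ℝ) (w : Fin n → ℝ) :
    (κ n).symm B (fun _ => w) = B w := by
  rw [← κ_apply ((κ n).symm B) w, (κ n).apply_symm_apply]

noncomputable def κL (n : ℕ) : ((Fin n → ℝ) [×1]→L[ℝ] ℝ) →L[ℝ] ((Fin n → ℝ) →L[ℝ] ℝ) :=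
  (κ n).toContinuousLinearEquiv.toContinuousLinearMap

@[simp] lemma κL_apply (m : (Fin n → ℝ) [×1]→L[ℝ] ℝ) : κL n m = κ n m := rfl

noncomputable def ev (n : ℕ) (w : Fin n → ℝ) : ((Fin n → ℝ) [×1]→L[ℝ] ℝ) →L[ℝ] ℝ :=
  (ContinuousLinearMap.apply ℝ ℝ w).comp (κL n)

lemma ev_apply (w : Fin n → ℝ) (B : (Fin n → ℝ) [×1]→L[ℝ] ℝ) :
    ev n w B = B (fun _ => w) := by
  simp [ev, κ_apply]

lemma h1top' : (1 : WithTop ℕ∞) ≤ ((⊤ : ℕ∞) : WithTop ℕ∞) :=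
  le_of_eq_of_le (by norm_cast) (WithTop.coe_le_coe.mpr (le_top : ((1:ℕ):ℕ∞) ≤ ⊤))

/-- Forward direction: constant coefficients implies closed. -/
lemma closed_of_const (V : Set (Fin n → ℝ)) (hV : IsOpen V)
    (ω : (Fin n → ℝ) → ((Fin n → ℝ) [×1]→L[ℝ] ℝ))
    (u : (Fin n → ℝ) → (Fin n → ℝ)) (hu : ContDiffOn ℝ (⊤ : ℕ∞) u V)
    (c : (Fin n → ℝ) [×1]→L[ℝ] ℝ)
    (hc : ∀ y ∈ V, ∀ v : Fin 1 → (Fin n → ℝ), ω y v = c (fun i => fderiv ℝ u y (v i))) :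
    ∀ y ∈ V, ∀ v₀ v₁ : Fin n → ℝ,
      fderiv ℝ ω y v₀ (fun _ => v₁) - fderiv ℝ ω y v₁ (fun _ => v₀) = 0 := by
  intro y hy v₀ v₁
  set ℓc : (Fin n → ℝ) →L[ℝ] ℝ := κ n c with hℓc
  set T : ((Fin n → ℝ) →L[ℝ] (Fin n → ℝ)) →L[ℝ] ((Fin n → ℝ) [×1]→L[ℝ] ℝ) :=
    ((κ n).symm.toContinuousLinearEquiv.toContinuousLinearMap).comp
      (ContinuousLinearMap.compL ℝ (Fin n → ℝ) (Fin n → ℝ) ℝ ℓc) with hT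
  have hTapp : ∀ (A : (Fin n → ℝ) →L[ℝ] (Fin n → ℝ)) (w : Fin n → ℝ),
      (T A) (fun _ : Fin 1 => w) = ℓc (A w) := by
    intro A w
    simp only [hT, ContinuousLinearMap.coe_comp', Function.comp_apply,
      ContinuousLinearEquiv.coe_coe, LinearIsometryEquiv.coe_toContinuousLinearEquiv,
      ContinuousLinearMap.compL_apply]
    rw [κ_symm_apply]; rfl
  -- ω eventually equals T ∘ fderiv u
  have hev : ω =ᶠ[nhds y] (fun z => T (fderiv ℝ u z)) := by
    filter_upwards [hV.mem_nhds hy] with z hz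
    ext v
    rw [hc z hz v, ml_apply_const c, ml_apply_const (T (fderiv ℝ u z)), hTapp]
    rfl
  -- differentiability of fderiv u at y
  have hu1 : ContDiffAt ℝ (⊤ : ℕ∞) u y := hu.contDiffAt (hV.mem_nhds hy)
  have hdu : DifferentiableAt ℝ (fderiv ℝ u) y := by
    have := hu1.fderiv_right (m := 1)
      (le_of_eq_of_le (by norm_cast) (WithTop.coe_le_coe.mpr (le_top : (1+1:ℕ∞) ≤ ⊤)))
    exact this.differentiableAt one_ne_zero
  have hfderiv : fderiv ℝ ω y = T.comp (fderiv ℝ (fderiv ℝ u) y) := by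
    rw [hev.fderiv_eq]
    exact (T.hasFDerivAt.comp y hdu.hasFDerivAt).fderiv
  have hsymm : ∀ v w : Fin n → ℝ,
      fderiv ℝ (fderiv ℝ u) y v w = fderiv ℝ (fderiv ℝ u) y w v := by
    intro v w
    refine second_derivative_symmetric_of_eventually (f := u) ?_ hdu.hasFDerivAt v w
    filter_upwards [hV.mem_nhds hy] with z hz
    exact ((hu.differentiableOn (by simp)).differentiableAt
      (hV.mem_nhds hz)).hasFDerivAt
  rw [hfderiv]
  simp only [ContinuousLinearMap.coe_comp', Function.comp_apply]
  rw [hTapp, hTapp, hsymm v₀ v₁, sub_self]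


lemma exists_primitive (U W : Set (Fin n → ℝ)) (hU : IsOpen U) (hW : IsOpen W)
    (ω : (Fin n → ℝ) → ((Fin n → ℝ) [×1]→L[ℝ] ℝ))
    (hω : ContDiffOn ℝ (⊤ : ℕ∞) ω U)
    (x : Fin n → ℝ) (hxU : x ∈ U) (hxW : x ∈ W)
    (hcl : ∀ y ∈ W, ∀ v₀ v₁ : Fin n → ℝ,
      fderiv ℝ ω y v₀ (fun _ => v₁) = fderiv ℝ ω y v₁ (fun _ => v₀)) :
    ∃ r > 0, ball x r ⊆ U ∩ W ∧ ∃ f : (Fin n → ℝ) → ℝ,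
      (∀ y ∈ ball x r, HasFDerivAt f (κ n (ω y)) y) ∧
      ContDiffOn ℝ (⊤ : ℕ∞) f (ball x r) := by
  obtain ⟨r₀, hr₀pos, hr₀⟩ : ∃ r₀ > 0, ball x r₀ ⊆ U ∩ W :=
    Metric.mem_nhds_iff.1 ((hU.inter hW).mem_nhds ⟨hxU, hxW⟩)
  set r := r₀ / 2 with hrdef
  have hrpos : 0 < r := by positivity
  have hKsub : closedBall x r ⊆ U ∩ W :=
    (closedBall_subset_ball (by simp [hrdef]; linarith)).trans hr₀
  have hbsub : ball x r ⊆ U ∩ W := ball_subset_closedBall.trans hKsub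
  refine ⟨r, hrpos, hbsub, ?_⟩
  have hballU : ball x r ⊆ U := fun y hy => (hbsub hy).1
  have hballW : ball x r ⊆ W := fun y hy => (hbsub hy).2
  have h1top : (1 : WithTop ℕ∞) ≤ ((⊤ : ℕ∞) : WithTop ℕ∞) :=
    le_of_eq_of_le (by norm_cast) (WithTop.coe_le_coe.mpr (le_top : ((1:ℕ):ℕ∞) ≤ ⊤))
  -- continuity facts
  have hωc : ContinuousOn ω U := hω.continuousOn
  have hω' : ContinuousOn (fderiv ℝ ω) U := hω.continuousOn_fderiv_of_isOpen hU h1top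
  have hωdiff : ∀ z ∈ U, HasFDerivAt ω (fderiv ℝ ω z) z := fun z hz =>
    ((hω.differentiableOn (by simp)).differentiableAt (hU.mem_nhds hz)).hasFDerivAt
  -- the path
  set γ : (Fin n → ℝ) → ℝ → (Fin n → ℝ) := fun y t => x + t • (y - x) with hγdef
  have hγmem : ∀ y ∈ ball x r, ∀ t : ℝ, |t| ≤ 1 → γ y t ∈ ball x r := by
    intro y hy t ht
    rw [mem_ball_iff_norm] at hy ⊢
    have : γ y t - x = t • (y - x) := by simp [hγdef]
    rw [this, norm_smul]
    calc ‖t‖ * ‖y - x‖ ≤ 1 * ‖y - x‖ := by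
          gcongr; exact ht
      _ = ‖y - x‖ := one_mul _
      _ < r := hy
  have hγcont : ∀ y, Continuous (γ y) := by intro y; fun_prop
  have hγmaps : ∀ y ∈ ball x r, MapsTo (γ y) (uIcc (0:ℝ) 1) (ball x r) := by
    intro y hy t ht
    rw [uIcc_of_le zero_le_one] at ht
    exact hγmem y hy t (abs_le.2 ⟨by linarith [ht.1], ht.2⟩)
  -- integrand and its derivative
  set F : (Fin n → ℝ) → ℝ → ℝ := fun y t => ev n (y - x) (ω (γ y t)) with hFdef
  set F' : (Fin n → ℝ) → ℝ → ((Fin n → ℝ) →L[ℝ] ℝ) := fun y t =>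
    κ n (ω (γ y t)) + t • ((ev n (y - x)).comp (fderiv ℝ ω (γ y t))) with hF'def
  have hFcont : ∀ y ∈ ball x r, ContinuousOn (F y) (uIcc (0:ℝ) 1) := by
    intro y hy
    exact (ev n (y - x)).continuous.comp_continuousOn
      ((hωc.mono hballU).comp (hγcont y).continuousOn (hγmaps y hy))
  have hF'cont : ∀ y ∈ ball x r, ContinuousOn (F' y) (uIcc (0:ℝ) 1) := by
    intro y hy
    have h1 : ContinuousOn (fun t => ω (γ y t)) (uIcc (0:ℝ) 1) :=
      (hωc.mono hballU).comp (hγcont y).continuousOn (hγmaps y hy)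
    have h2 : ContinuousOn (fun t => fderiv ℝ ω (γ y t)) (uIcc (0:ℝ) 1) :=
      (hω'.mono hballU).comp (hγcont y).continuousOn (hγmaps y hy)
    exact ((κL n).continuous.comp_continuousOn h1).add
      (continuousOn_id.smul
        (((ContinuousLinearMap.compL ℝ (Fin n → ℝ) ((Fin n → ℝ) [×1]→L[ℝ] ℝ) ℝ
          (ev n (y - x))).continuous.comp_continuousOn h2)))
  -- bounds
  obtain ⟨M₀, hM₀⟩ := (isCompact_closedBall x r).exists_bound_of_continuousOn
    ((hωc.mono (hKsub.trans inter_subset_left)))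
  obtain ⟨M₁, hM₁⟩ := (isCompact_closedBall x r).exists_bound_of_continuousOn
    (f := fderiv ℝ ω) (by exact (hω'.mono (hKsub.trans inter_subset_left)))
  have hM₀0 : 0 ≤ M₀ := le_trans (norm_nonneg _) (hM₀ x (mem_closedBall_self hrpos.le))
  have hM₁0 : 0 ≤ M₁ := le_trans (norm_nonneg _) (hM₁ x (mem_closedBall_self hrpos.le))
  -- key: differentiation under the integral sign
  have hkey : ∀ y₀ ∈ ball x r,
      HasFDerivAt (fun y => ∫ t in (0:ℝ)..1, F y t) (∫ t in (0:ℝ)..1, F' y₀ t) y₀ := by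
    intro y₀ hy₀
    obtain ⟨ε, hεpos, hεsub⟩ : ∃ ε > 0, ball y₀ ε ⊆ ball x r :=
      Metric.mem_nhds_iff.1 (isOpen_ball.mem_nhds hy₀)
    apply intervalIntegral.hasFDerivAt_integral_of_dominated_of_fderiv_le
      (bound := fun _ => M₀ + M₁ * r) (ball_mem_nhds y₀ hεpos)
    · filter_upwards [isOpen_ball.mem_nhds hy₀] with y hy
      exact ((hFcont y hy).mono uIoc_subset_uIcc).aestronglyMeasurable measurableSet_uIoc
    · exact (hFcont y₀ hy₀).intervalIntegrable
    · exact ((hF'cont y₀ hy₀).mono uIoc_subset_uIcc).aestronglyMeasurable measurableSet_uIoc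
    · refine MeasureTheory.ae_of_all _ (fun t ht y hy => ?_)
      rw [Set.uIoc_of_le zero_le_one] at ht
      have htabs : |t| ≤ 1 := abs_le.2 ⟨by linarith [ht.1], ht.2⟩
      have hyb : y ∈ ball x r := hεsub hy
      have hγb : γ y t ∈ closedBall x r := ball_subset_closedBall (hγmem y hyb t htabs)
      refine ContinuousLinearMap.opNorm_le_bound _ (by positivity) (fun v => ?_)
      have hFv : F' y t v = ω (γ y t) (fun _ => v)
          + t * (fderiv ℝ ω (γ y t) v) (fun _ => y - x) := by
        simp [hF'def, κ_apply, ev_apply, ContinuousLinearMap.add_apply]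
      rw [hFv]
      have b1 : ‖ω (γ y t) (fun _ => v)‖ ≤ M₀ * ‖v‖ := by
        calc ‖ω (γ y t) (fun _ => v)‖ ≤ ‖ω (γ y t)‖ * ∏ _i : Fin 1, ‖v‖ :=
            (ω (γ y t)).le_opNorm _
          _ = ‖ω (γ y t)‖ * ‖v‖ := by simp
          _ ≤ M₀ * ‖v‖ := by gcongr; exact hM₀ _ hγb
      have b2 : ‖(fderiv ℝ ω (γ y t) v) (fun _ => y - x)‖ ≤ M₁ * ‖v‖ * r := by
        calc ‖(fderiv ℝ ω (γ y t) v) (fun _ => y - x)‖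
            ≤ ‖fderiv ℝ ω (γ y t) v‖ * ∏ _i : Fin 1, ‖y - x‖ :=
            (fderiv ℝ ω (γ y t) v).le_opNorm _
          _ = ‖fderiv ℝ ω (γ y t) v‖ * ‖y - x‖ := by simp
          _ ≤ (M₁ * ‖v‖) * r := by
              have h1 : ‖fderiv ℝ ω (γ y t) v‖ ≤ M₁ * ‖v‖ := by
                calc ‖fderiv ℝ ω (γ y t) v‖ ≤ ‖fderiv ℝ ω (γ y t)‖ * ‖v‖ :=
                    (fderiv ℝ ω (γ y t)).le_opNorm v
                  _ ≤ M₁ * ‖v‖ := by gcongr; exact hM₁ _ hγb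
              have h2 : ‖y - x‖ ≤ r := by
                rw [mem_ball_iff_norm] at hyb; exact hyb.le
              exact mul_le_mul h1 h2 (norm_nonneg _) (by positivity)
      calc ‖ω (γ y t) (fun _ => v) + t * (fderiv ℝ ω (γ y t) v) (fun _ => y - x)‖
          ≤ ‖ω (γ y t) (fun _ => v)‖ + ‖t * (fderiv ℝ ω (γ y t) v) (fun _ => y - x)‖ :=
            norm_add_le _ _
        _ ≤ M₀ * ‖v‖ + |t| * (M₁ * ‖v‖ * r) := by
            rw [norm_mul]
            have : ‖t‖ = |t| := rfl
            rw [this]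
            gcongr <;> first | exact b1 | exact b2 | positivity
        _ ≤ M₀ * ‖v‖ + 1 * (M₁ * ‖v‖ * r) := by gcongr
        _ = (M₀ + M₁ * r) * ‖v‖ := by ring
    · exact intervalIntegrable_const
    · refine MeasureTheory.ae_of_all _ (fun t ht y hy => ?_)
      rw [Set.uIoc_of_le zero_le_one] at ht
      have htabs : |t| ≤ 1 := abs_le.2 ⟨by linarith [ht.1], ht.2⟩
      have hyb : y ∈ ball x r := hεsub hy
      have hγU : γ y t ∈ U := hballU (hγmem y hyb t htabs)
      have hγd : HasFDerivAt (fun z => γ z t) (t • ContinuousLinearMap.id ℝ (Fin n → ℝ)) y := by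
        have h0 : (fun z => γ z t)
            = fun z => (t • ContinuousLinearMap.id ℝ (Fin n → ℝ)) z + (x - t • x) := by
          funext z
          simp [hγdef, smul_sub]
          abel
        rw [h0]
        exact (t • ContinuousLinearMap.id ℝ (Fin n → ℝ)).hasFDerivAt.add_const _
      have hcomp : HasFDerivAt (fun z => ω (γ z t))
          ((fderiv ℝ ω (γ y t)).comp (t • ContinuousLinearMap.id ℝ (Fin n → ℝ))) y :=
        (hωdiff _ hγU).comp y hγd
      have hc : HasFDerivAt (fun z => κL n (ω (γ z t)))
          ((κL n).comp ((fderiv ℝ ω (γ y t)).comp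
            (t • ContinuousLinearMap.id ℝ (Fin n → ℝ)))) y :=
        (κL n).hasFDerivAt.comp y hcomp
      have hsub : HasFDerivAt (fun z : Fin n → ℝ => z - x)
          (ContinuousLinearMap.id ℝ (Fin n → ℝ)) y := (hasFDerivAt_id y).sub_const x
      have hFd := hc.clm_apply hsub
      have heq : ((κL n (ω (γ y t))).comp (ContinuousLinearMap.id ℝ (Fin n → ℝ))
          + ((κL n).comp ((fderiv ℝ ω (γ y t)).comp
            (t • ContinuousLinearMap.id ℝ (Fin n → ℝ)))).flip (y - x)) = F' y t := by
        ext v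
        simp only [hF'def, ContinuousLinearMap.add_apply, ContinuousLinearMap.coe_comp',
          Function.comp_apply, ContinuousLinearMap.flip_apply, ContinuousLinearMap.id_apply,
          ContinuousLinearMap.smul_apply, κL_apply, ContinuousLinearMap.smul_apply,
          _root_.map_smul]
        simp [κ_apply, ev_apply]
      rw [heq] at hFd
      exact hFd
  -- FTC: identify the derivative
  have hFTC : ∀ y₀ ∈ ball x r, (∫ t in (0:ℝ)..1, F' y₀ t) = κ n (ω y₀) := by
    intro y₀ hy₀
    ext v
    rw [ContinuousLinearMap.intervalIntegral_apply ((hF'cont y₀ hy₀).intervalIntegrable) v]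
    have hψ : ∀ t ∈ uIcc (0:ℝ) 1,
        HasDerivAt (fun s => s * ev n v (ω (γ y₀ s))) (F' y₀ t v) t := by
      intro t ht
      have htabs : |t| ≤ 1 := by
        rw [uIcc_of_le zero_le_one] at ht
        exact abs_le.2 ⟨by linarith [ht.1], ht.2⟩
      have hγb : γ y₀ t ∈ ball x r := hγmem y₀ hy₀ t htabs
      have hγ' : HasDerivAt (fun s => γ y₀ s) (y₀ - x) t := by
        have := (((hasDerivAt_id t).smul_const (y₀ - x)).const_add x)
        simpa [hγdef] using this
      have hg : HasDerivAt (fun s => ev n v (ω (γ y₀ s)))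
          (ev n v (fderiv ℝ ω (γ y₀ t) (y₀ - x))) t :=
        (ev n v).hasFDerivAt.comp_hasDerivAt t
          ((hωdiff _ (hballU hγb)).comp_hasDerivAt t hγ')
      have hprod : HasDerivAt (fun s => s * ev n v (ω (γ y₀ s)))
          (1 * ev n v (ω (γ y₀ t)) + t * ev n v (fderiv ℝ ω (γ y₀ t) (y₀ - x))) t :=
        (hasDerivAt_id t).mul hg
      convert hprod using 1
      simp only [hF'def, id_eq, one_mul, ContinuousLinearMap.add_apply,
        ContinuousLinearMap.smul_apply, ContinuousLinearMap.coe_comp',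
        Function.comp_apply, κ_apply, ev_apply, smul_eq_mul]
      rw [hcl (γ y₀ t) (hballW hγb) (y₀ - x) v]
    have hint : IntervalIntegrable (fun t => F' y₀ t v) volume 0 1 :=
      (((ContinuousLinearMap.apply ℝ ℝ v).continuous.comp_continuousOn
        (hF'cont y₀ hy₀))).intervalIntegrable
    rw [intervalIntegral.integral_eq_sub_of_hasDerivAt hψ hint]
    have hγ1 : γ y₀ 1 = y₀ := by simp [hγdef]
    rw [hγ1]
    simp [κ_apply, ev_apply]
  -- assemble
  refine ⟨fun y => ∫ t in (0:ℝ)..1, F y t, fun y hy => ?_, ?_⟩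
  · have := hkey y hy
    rwa [hFTC y hy] at this
  · rw [contDiffOn_infty_iff_fderiv_of_isOpen isOpen_ball]
    refine ⟨fun y hy => ?_, ?_⟩
    · have := hkey y hy
      rw [hFTC y hy] at this
      exact this.differentiableAt.differentiableWithinAt
    · have hfd : ∀ y ∈ ball x r,
          fderiv ℝ (fun y => ∫ t in (0:ℝ)..1, F y t) y = κL n (ω y) := by
        intro y hy
        have := hkey y hy
        rw [hFTC y hy] at this
        exact this.fderiv
      exact ContDiffOn.congr ((κL n).contDiff.comp_contDiffOn (hω.mono hballU)) hfd


lemma construct (U W : Set (Fin n → ℝ)) (hU : IsOpen U) (hW : IsOpen W)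
    (ω : (Fin n → ℝ) → ((Fin n → ℝ) [×1]→L[ℝ] ℝ))
    (hω : ContDiffOn ℝ (⊤ : ℕ∞) ω U)
    (x : Fin n → ℝ) (hxU : x ∈ U) (hxW : x ∈ W) (hx0 : ω x ≠ 0)
    (hcl : ∀ y ∈ W, ∀ v₀ v₁ : Fin n → ℝ,
      fderiv ℝ ω y v₀ (fun _ => v₁) = fderiv ℝ ω y v₁ (fun _ => v₀)) :
    ∃ V : Set (Fin n → ℝ), IsOpen V ∧ x ∈ V ∧ V ⊆ U ∧
    ∃ u : (Fin n → ℝ) → (Fin n → ℝ),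
      ContDiffOn ℝ (⊤ : ℕ∞) u V ∧ Set.InjOn u V ∧ IsOpen (u '' V) ∧
      (∀ y ∈ V, Function.Bijective (fderiv ℝ u y)) ∧
      ∃ c : (Fin n → ℝ) [×1]→L[ℝ] ℝ,
        ∀ y ∈ V, ∀ v : Fin 1 → (Fin n → ℝ),
          ω y v = c (fun i => fderiv ℝ u y (v i)) := by
  obtain ⟨r, hrpos, hrsub, f, hfder, hfsmooth⟩ :=
    exists_primitive U W hU hW ω hω x hxU hxW hcl
  have hballU : ball x r ⊆ U := hrsub.trans inter_subset_left
  have hxball : x ∈ ball x r := mem_ball_self hrpos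
  -- a covector
  set ℓx : (Fin n → ℝ) →L[ℝ] ℝ := κ n (ω x) with hℓx
  have hℓx0 : ℓx ≠ 0 := by
    intro h
    apply hx0
    have : κ n (ω x) = κ n 0 := by rw [← hℓx, h, map_zero]
    exact (κ n).injective this
  obtain ⟨w, hw⟩ : ∃ w, ℓx w ≠ 0 := by
    by_contra h
    push_neg at h
    exact hℓx0 (ContinuousLinearMap.ext fun w => by simp [h w])
  set e : Fin n → ℝ := (ℓx w)⁻¹ • w with he
  have hℓxe : ℓx e = 1 := by
    rw [he, _root_.map_smul, smul_eq_mul, inv_mul_cancel₀ hw]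
  -- the coordinate change
  set u : (Fin n → ℝ) → (Fin n → ℝ) := fun y => y + (f y - ℓx y) • e with hudef
  set A : (Fin n → ℝ) → ((Fin n → ℝ) →L[ℝ] (Fin n → ℝ)) := fun y =>
    ContinuousLinearMap.id ℝ (Fin n → ℝ) + (κ n (ω y) - ℓx).smulRight e with hA
  have huder : ∀ y ∈ ball x r, HasFDerivAt u (A y) y := by
    intro y hy
    have h1 : HasFDerivAt (fun z => f z - ℓx z) (κ n (ω y) - ℓx) y :=
      (hfder y hy).sub ℓx.hasFDerivAt
    exact (hasFDerivAt_id y).add (h1.smul_const e)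
  have hAx : A x = ContinuousLinearMap.id ℝ (Fin n → ℝ) := by
    ext v
    simp [hA, hℓx]
  have husmooth : ContDiffOn ℝ (⊤ : ℕ∞) u (ball x r) :=
    contDiffOn_id.add ((hfsmooth.sub (ℓx.contDiff.contDiffOn)).smul contDiffOn_const)
  have hustrict : HasStrictFDerivAt u
      (↑(ContinuousLinearEquiv.refl ℝ (Fin n → ℝ)) : (Fin n → ℝ) →L[ℝ] (Fin n → ℝ)) x := by
    have hca : ContDiffAt ℝ (⊤ : ℕ∞) u x := husmooth.contDiffAt (isOpen_ball.mem_nhds hxball)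
    have h := hca.hasStrictFDerivAt (by simp)
    rwa [(huder x hxball).fderiv, hAx] at h
  set Φ := HasStrictFDerivAt.toOpenPartialHomeomorph u hustrict with hΦ
  have hΦcoe : ⇑Φ = u := hustrict.toOpenPartialHomeomorph_coe
  have hxΦ : x ∈ Φ.source := hustrict.mem_toOpenPartialHomeomorph_source
  -- the set where the derivative is invertible
  have hScont : ContinuousOn (fun y => κ n (ω y) e) (ball x r) :=
    ((ContinuousLinearMap.apply ℝ ℝ e).continuous.comp
      (κL n).continuous).comp_continuousOn (hω.continuousOn.mono hballU)
  have hSopen : IsOpen (ball x r ∩ (fun y => κ n (ω y) e) ⁻¹' ({0}ᶜ)) :=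
    hScont.isOpen_inter_preimage isOpen_ball isOpen_compl_singleton
  set V : Set (Fin n → ℝ) := Φ.source ∩ (ball x r ∩ (fun y => κ n (ω y) e) ⁻¹' ({0}ᶜ))
    with hV
  have hVopen : IsOpen V := Φ.open_source.inter hSopen
  have hxV : x ∈ V := by
    refine ⟨hxΦ, hxball, ?_⟩
    simp only [mem_preimage, mem_compl_iff, mem_singleton_iff, ← hℓx]
    rw [hℓxe]
    norm_num
  have hVball : V ⊆ ball x r := fun y hy => hy.2.1
  refine ⟨V, hVopen, hxV, hVball.trans hballU, u, husmooth.mono hVball, ?_, ?_, ?_, ?_⟩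
  · -- injectivity
    rw [← hΦcoe]
    exact Φ.injOn.mono inter_subset_left
  · -- open image
    rw [← hΦcoe]
    exact Φ.isOpen_image_of_subset_source hVopen inter_subset_left
  · -- bijective derivative
    intro y hy
    have hyb : y ∈ ball x r := hVball hy
    have ha : κ n (ω y) e ≠ 0 := hy.2.2
    rw [(huder y hyb).fderiv]
    set ρ : (Fin n → ℝ) →L[ℝ] ℝ := κ n (ω y) - ℓx with hρ
    have hρe : ρ e = κ n (ω y) e - 1 := by
      simp [hρ, hℓxe]
    set B : (Fin n → ℝ) →L[ℝ] (Fin n → ℝ) :=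
      ContinuousLinearMap.id ℝ (Fin n → ℝ) - (((κ n (ω y) e)⁻¹ • ρ).smulRight e) with hB
    refine Function.bijective_iff_has_inverse.2 ⟨B, fun v => ?_, fun v => ?_⟩
    · -- B (A y v) = v
      simp only [hA, hB, ContinuousLinearMap.add_apply, ContinuousLinearMap.sub_apply,
        ContinuousLinearMap.coe_id', id_eq, ContinuousLinearMap.smulRight_apply,
        ContinuousLinearMap.smul_apply, map_add, _root_.map_smul, smul_eq_mul, hρe]
      match_scalars
      all_goals try field_simp
      all_goals try simp only [hρ, ContinuousLinearMap.sub_apply]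
      all_goals ring
    · -- A y (B v) = v
      simp only [hA, hB, ContinuousLinearMap.add_apply, ContinuousLinearMap.sub_apply,
        ContinuousLinearMap.coe_id', id_eq, ContinuousLinearMap.smulRight_apply,
        ContinuousLinearMap.smul_apply, map_sub, _root_.map_smul, smul_eq_mul, hρe]
      match_scalars
      all_goals try field_simp
      all_goals try simp only [hρ, ContinuousLinearMap.sub_apply]
      all_goals (try rw [hℓxe]) <;> ring
  · -- constant coefficients
    refine ⟨ω x, fun y hy v => ?_⟩
    have hyb : y ∈ ball x r := hVball hy
    rw [ml_apply_const (ω x), ml_apply_const (ω y)]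
    rw [← κ_apply (ω x), ← κ_apply (ω y)]
    show κ n (ω y) (v 0) = ℓx (fderiv ℝ u y ((fun i => v i) 0))
    rw [(huder y hyb).fderiv]
    simp only [hA, ContinuousLinearMap.add_apply, ContinuousLinearMap.coe_id', id_eq,
      ContinuousLinearMap.smulRight_apply, map_add, _root_.map_smul, smul_eq_mul,
      ContinuousLinearMap.sub_apply, hℓxe]
    ring


end OneFormAux

/-- Constant coefficients for a `p`-form (see context). -/
def HasConstantCoefficientsFormAt (n p : ℕ) (U : Set (Fin n → ℝ))
    (ω : (Fin n → ℝ) → ((Fin n → ℝ) [×p]→L[ℝ] ℝ)) (x : Fin n → ℝ) : Prop :=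
  ∃ V : Set (Fin n → ℝ), IsOpen V ∧ x ∈ V ∧ V ⊆ U ∧
    ∃ u : (Fin n → ℝ) → (Fin n → ℝ),
      ContDiffOn ℝ (⊤ : ℕ∞) u V ∧ Set.InjOn u V ∧ IsOpen (u '' V) ∧
      (∀ y ∈ V, Function.Bijective (fderiv ℝ u y)) ∧
      ∃ c : (Fin n → ℝ) [×p]→L[ℝ] ℝ,
        ∀ y ∈ V, ∀ v : Fin p → (Fin n → ℝ),
          ω y v = c (fun i => fderiv ℝ u y (v i))

/-- a smooth `1`-form `ω` with `ω_x ≠ 0` has constant coefficients on a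
neighbourhood of `x` if and only if `dω = 0` on a neighbourhood of `x`, where
`dω_y(v₀,v₁) = (Dω_y(v₀))(v₁) − (Dω_y(v₁))(v₀)`. -/
theorem oneForm_constantCoefficients_iff_closed (n : ℕ) (U : Set (Fin n → ℝ))
    (hU : IsOpen U)
    (ω : (Fin n → ℝ) → ((Fin n → ℝ) [×1]→L[ℝ] ℝ))
    (hω : ContDiffOn ℝ (⊤ : ℕ∞) ω U)
    (x : Fin n → ℝ) (hx : x ∈ U) (hx0 : ω x ≠ 0) :
    HasConstantCoefficientsFormAt n 1 U ω x ↔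
      ∃ W : Set (Fin n → ℝ), IsOpen W ∧ x ∈ W ∧
        ∀ y ∈ W, ∀ v₀ v₁ : Fin n → ℝ,
          fderiv ℝ ω y v₀ (fun _ => v₁) - fderiv ℝ ω y v₁ (fun _ => v₀) = 0 := by
  constructor
  · rintro ⟨V, hVopen, hxV, hVU, u, hu, -, -, -, c, hc⟩
    exact ⟨V, hVopen, hxV, OneFormAux.closed_of_const V hVopen ω u hu c hc⟩
  · rintro ⟨W, hWopen, hxW, h0⟩
    have hcl : ∀ y ∈ W, ∀ v₀ v₁ : Fin n → ℝ,
        fderiv ℝ ω y v₀ (fun _ => v₁) = fderiv ℝ ω y v₁ (fun _ => v₀) :=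
      fun y hy v₀ v₁ => sub_eq_zero.1 (h0 y hy v₀ v₁)
    exact OneFormAux.construct U W hU hWopen ω hω x hx hxW hx0 hcl
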